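/- Let F be a field with char F = 3, and let · be a bilinear multiplication on F × F that is not identically zero, is endo-commutative ((x·x)·(y·y) = (x·y)·(x·y) for all x, y) and is curled (for every x there exists λ ∈ F with x·x = λ • x). Then (F × F, ·) is isomorphic to exactly one of the following algebras, given by their matrices of structure constants: ((α1, 0, 0, 0), (0, 2α1−1, 1−α1, 0)) for some α1 ∈ F; or ((0, 1, 1, 0), (0, 0, 0, −1)). Here 'exactly one' means in addition that no two distinct algebras of this list (in particular for distinct values of α1) are isomorphic to each other. -/

import Mathlib

/-- The bilinear multiplication on `F × F` determined by the matrix of structure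
constants `((a1, a2, a3, a4), (b1, b2, b3, b4))`. -/
def scMul {F : Type*} [Field F] (a1 a2 a3 a4 b1 b2 b3 b4 : F) (x y : F × F) : F × F :=
  (a1 * x.1 * y.1 + a2 * x.1 * y.2 + a3 * x.2 * y.1 + a4 * x.2 * y.2,
   b1 * x.1 * y.1 + b2 * x.1 * y.2 + b3 * x.2 * y.1 + b4 * x.2 * y.2)

/-- A multiplication `m` on `F × F` is endo-commutative if `(x·x)·(y·y) = (x·y)·(x·y)`. -/
def IsEndoCommutative {F : Type*} [Field F] (m : F × F → F × F → F × F) : Prop :=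
  ∀ x y : F × F, m (m x x) (m y y) = m (m x y) (m x y)

/-- A multiplication `m` on `F × F` is curled if every square `x·x` is a scalar
multiple of `x`. -/
def IsCurled {F : Type*} [Field F] (m : F × F → F × F → F × F) : Prop :=
  ∀ x : F × F, ∃ lam : F, m x x = lam • x

/-- `m` is bilinear (linear in each argument). -/
def IsBilinearMul {F : Type*} [Field F] (m : F × F → F × F → F × F) : Prop :=
  (∀ (a : F) (x x' y : F × F), m (a • x + x') y = a • m x y + m x' y) ∧
  (∀ (a : F) (x y y' : F × F), m x (a • y + y') = a • m x y + m x y')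

/-- Two multiplications on `F × F` are isomorphic if some `F`-linear
equivalence `g` of `F × F` satisfies `g (x·y) = g x ∘ g y`. -/
def AlgIso {F : Type*} [Field F] (m₁ m₂ : F × F → F × F → F × F) : Prop :=
  ∃ g : (F × F) ≃ₗ[F] F × F, ∀ x y, g (m₁ x y) = m₂ (g x) (g y)

/-- The list of endo-commutative curled algebras (char F = 3):
`some a1` is `A₃,₃(a1, 0, 2a1 - 1)` and `none` is `A₁₁,₃(0)`. -/
def ecCurledFamily3 {F : Type*} [Field F] : Option F → (F × F → F × F → F × F)
  | some a1 => scMul a1 0 0 0 0 (2 * a1 - 1) (1 - a1) 0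
  | none => scMul 0 1 1 0 0 0 0 (-1)

section Aux
variable {F : Type*} [Field F]

theorem algIso_symm {m₁ m₂ : F × F → F × F → F × F} (h : AlgIso m₁ m₂) : AlgIso m₂ m₁ := by
  obtain ⟨g, hg⟩ := h
  refine ⟨g.symm, fun x y => ?_⟩
  have h2 := hg (g.symm x) (g.symm y)
  rw [g.apply_symm_apply, g.apply_symm_apply] at h2
  rw [← h2, g.symm_apply_apply]

theorem algIso_trans {m₁ m₂ m₃ : F × F → F × F → F × F} (h : AlgIso m₁ m₂) (h' : AlgIso m₂ m₃) :
    AlgIso m₁ m₃ := by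
  obtain ⟨g, hg⟩ := h
  obtain ⟨g', hg'⟩ := h'
  exact ⟨g.trans g', fun x y => by simp [LinearEquiv.trans_apply, hg, hg']⟩

def mkMap (p q r s : F) : (F × F) →ₗ[F] F × F where
  toFun x := (p * x.1 + q * x.2, r * x.1 + s * x.2)
  map_add' x y := by
    simp only [Prod.fst_add, Prod.snd_add, Prod.mk_add_mk, Prod.mk.injEq]
    constructor <;> ring
  map_smul' c x := by
    simp only [Prod.smul_fst, Prod.smul_snd, smul_eq_mul, RingHom.id_apply, Prod.smul_mk,
      Prod.mk.injEq]
    constructor <;> ring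

@[simp] lemma mkMap_apply (p q r s : F) (x : F × F) :
    mkMap p q r s x = (p * x.1 + q * x.2, r * x.1 + s * x.2) := rfl

def mkEquiv (p q r s : F) (h : p * s - q * r ≠ 0) : (F × F) ≃ₗ[F] F × F :=
  LinearEquiv.ofLinear (mkMap p q r s)
    (mkMap (s / (p * s - q * r)) (-q / (p * s - q * r)) (-r / (p * s - q * r))
      (p / (p * s - q * r)))
    (by
      apply LinearMap.ext
      intro z
      simp only [LinearMap.comp_apply, mkMap_apply, LinearMap.id_apply]
      rw [Prod.ext_iff]
      constructor
      · simp only [div_eq_mul_inv]; linear_combination z.1 * mul_inv_cancel₀ h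
      · simp only [div_eq_mul_inv]; linear_combination z.2 * mul_inv_cancel₀ h)
    (by
      apply LinearMap.ext
      intro z
      simp only [LinearMap.comp_apply, mkMap_apply, LinearMap.id_apply]
      rw [Prod.ext_iff]
      constructor
      · simp only [div_eq_mul_inv]; linear_combination z.1 * mul_inv_cancel₀ h
      · simp only [div_eq_mul_inv]; linear_combination z.2 * mul_inv_cancel₀ h)

@[simp] lemma mkEquiv_apply (p q r s : F) (h : p * s - q * r ≠ 0) (x : F × F) :
    mkEquiv p q r s h x = (p * x.1 + q * x.2, r * x.1 + s * x.2) := rfl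

theorem algIso_of_matrix (m₁ m₂ : F × F → F × F → F × F) (P : (F × F) ≃ₗ[F] F × F)
    (h : ∀ x y, m₁ (P x) (P y) = P (m₂ x y)) : AlgIso m₁ m₂ := by
  refine ⟨P.symm, fun x y => ?_⟩
  have h2 := h (P.symm x) (P.symm y)
  rw [P.apply_symm_apply, P.apply_symm_apply] at h2
  rw [h2, P.symm_apply_apply]

theorem exists_consts (m : F × F → F × F → F × F) (hbil : IsBilinearMul m) :
    ∃ a1 a2 a3 a4 b1 b2 b3 b4 : F, ∀ x y, m x y = scMul a1 a2 a3 a4 b1 b2 b3 b4 x y := by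
  obtain ⟨hL, hR⟩ := hbil
  have h0L : ∀ y, m 0 y = 0 := by
    intro y
    have h := hL 1 0 0 y
    simp only [one_smul, add_zero] at h
    exact (left_eq_add.mp h)
  have h0R : ∀ x, m x 0 = 0 := by
    intro x
    have h := hR 1 x 0 0
    simp only [one_smul, add_zero] at h
    exact (left_eq_add.mp h)
  have hsL : ∀ (c : F) (x y : F × F), m (c • x) y = c • m x y := by
    intro c x y
    have h := hL c x 0 y
    simpa [h0L] using h
  have hsR : ∀ (c : F) (x y : F × F), m x (c • y) = c • m x y := by
    intro c x y
    have h := hR c x y 0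
    simpa [h0R] using h
  have key : ∀ x y : F × F, m x y =
      (x.1 * y.1) • m (1,0) (1,0) + (x.1 * y.2) • m (1,0) (0,1) +
      (x.2 * y.1) • m (0,1) (1,0) + (x.2 * y.2) • m (0,1) (0,1) := by
    intro x y
    have hx : x = x.1 • ((1:F),(0:F)) + x.2 • ((0:F),(1:F)) := by
      rw [Prod.ext_iff]; constructor <;> simp
    have hy : y = y.1 • ((1:F),(0:F)) + y.2 • ((0:F),(1:F)) := by
      rw [Prod.ext_iff]; constructor <;> simp
    conv_lhs => rw [hx, hy]
    rw [hL, hsL, hR, hsR, hR, hsR]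
    module
  refine ⟨(m (1,0) (1,0)).1, (m (1,0) (0,1)).1, (m (0,1) (1,0)).1, (m (0,1) (0,1)).1,
    (m (1,0) (1,0)).2, (m (1,0) (0,1)).2, (m (0,1) (1,0)).2, (m (0,1) (0,1)).2,
    fun x y => ?_⟩
  rw [key x y, Prod.ext_iff]
  simp only [scMul, Prod.fst_add, Prod.snd_add, Prod.smul_fst, Prod.smul_snd, smul_eq_mul]
  constructor <;> ring

end Aux

section NonIso
variable {F : Type*} [Field F]

theorem noniso_some_some (char3 : (3:F) = 0) (α α' : F)
    (h : AlgIso (ecCurledFamily3 (some α)) (ecCurledFamily3 (F := F) (some α'))) : α = α' := by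
  obtain ⟨g, hg⟩ := h
  have e2smul : ∀ c : F, g (0, c) = c • g (0, 1) := by
    intro c
    have hc : ((0:F), c) = c • ((0:F), (1:F)) := by
      rw [Prod.ext_iff]; constructor <;> simp
    rw [hc, map_smul]
  have h12 := hg (1, 0) (0, 1)
  have h21 := hg (0, 1) (1, 0)
  simp only [ecCurledFamily3, scMul] at h12 h21
  norm_num at h12 h21
  rw [e2smul] at h12 h21
  rw [Prod.ext_iff] at h12 h21
  simp only [Prod.smul_fst, Prod.smul_snd, smul_eq_mul] at h12 h21
  have hq : (g (0, 1)).1 = 0 := by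
    linear_combination h12.1 - h21.1 + ((1 - α) * (g (0, 1)).1) * char3
  have hw : (g (0, 1)).2 ≠ 0 := by
    intro hw0
    have hz : g (0, 1) = 0 := by
      rw [Prod.ext_iff]
      exact ⟨by simpa using hq, by simpa using hw0⟩
    rw [LinearEquiv.map_eq_zero_iff] at hz
    have := congrArg Prod.snd hz
    simp at this
  have hB' : (2 * α - 1) * (g (0, 1)).2 = ((2 * α' - 1) * (g (1, 0)).1) * (g (0, 1)).2 := by
    linear_combination h12.2 + ((1 - α') * (g (1, 0)).2) * hq
  have hD' : (1 - α) * (g (0, 1)).2 = ((1 - α') * (g (1, 0)).1) * (g (0, 1)).2 := by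
    linear_combination h21.2 + ((2 * α' - 1) * (g (1, 0)).2) * hq
  have hp2 := mul_right_cancel₀ hw hB'
  have hp4 := mul_right_cancel₀ hw hD'
  have hp : (g (1, 0)).1 = 1 := by linear_combination (-2) * hp4 - hp2
  linear_combination (-1) * hp4 + (α' - 1) * hp

theorem noniso_some_none (char3 : (3:F) = 0) (α : F)
    (h : AlgIso (ecCurledFamily3 (some α)) (ecCurledFamily3 (F := F) none)) : False := by
  have h2ne : (2:F) ≠ 0 := by
    intro h2
    have h1 : (1:F) = 0 := by linear_combination char3 - h2
    exact one_ne_zero h1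
  obtain ⟨g, hg⟩ := h
  have e2smul : ∀ c : F, g (0, c) = c • g (0, 1) := by
    intro c
    have hc : ((0:F), c) = c • ((0:F), (1:F)) := by
      rw [Prod.ext_iff]; constructor <;> simp
    rw [hc, map_smul]
  have h22 := hg (0, 1) (0, 1)
  have h12 := hg (1, 0) (0, 1)
  have h21 := hg (0, 1) (1, 0)
  simp only [ecCurledFamily3, scMul] at h22 h12 h21
  norm_num at h22 h12 h21
  rw [Prod.ext_iff] at h22
  simp only [Prod.fst_zero, Prod.snd_zero] at h22
  simp only [Prod.mk_zero_zero, map_zero, Prod.fst_zero, Prod.snd_zero] at h22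
  have hw : (g (0, 1)).2 = 0 :=
    mul_self_eq_zero.mp (by linear_combination h22.2)
  have hq : (g (0, 1)).1 ≠ 0 := by
    intro hq0
    have hz : g (0, 1) = 0 := by
      rw [Prod.ext_iff]
      exact ⟨by simpa using hq0, by simpa using hw⟩
    rw [LinearEquiv.map_eq_zero_iff] at hz
    have := congrArg Prod.snd hz
    simp at this
  rw [e2smul] at h12 h21
  rw [Prod.ext_iff] at h12 h21
  simp only [Prod.smul_fst, Prod.smul_snd, smul_eq_mul] at h12 h21
  have hr1 : (2 * α - 1) * (g (0, 1)).1 = (g (1, 0)).2 * (g (0, 1)).1 := by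
    linear_combination h12.1 + (g (1, 0)).1 * hw
  have hr2 : (1 - α) * (g (0, 1)).1 = (g (1, 0)).2 * (g (0, 1)).1 := by
    linear_combination h21.1 + (g (1, 0)).1 * hw
  have hA := mul_right_cancel₀ hq hr1
  have hB := mul_right_cancel₀ hq hr2
  exact h2ne (by linear_combination (-1) * hA + hB + α * char3)

theorem pairwise_noniso (char3 : (3:F) = 0) :
    ∀ i j : Option F, i ≠ j → ¬ AlgIso (ecCurledFamily3 (F := F) i) (ecCurledFamily3 j) := by
  intro i j hne hiso
  match i, j with
  | some α, some α' => exact hne (by rw [noniso_some_some char3 α α' hiso])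
  | some α, none => exact noniso_some_none char3 α hiso
  | none, some α => exact noniso_some_none char3 α (algIso_symm hiso)
  | none, none => exact hne rfl

end NonIso


/-- over a field of characteristic 3, any nonzero bilinear
endo-commutative curled multiplication on `F × F` is isomorphic to exactly one
member of `ecCurledFamily3`, and the members of `ecCurledFamily3` are pairwise
non-isomorphic. -/
theorem stmt_19 {F : Type*} [Field F] (h3 : ringChar F = 3)
    (m : F × F → F × F → F × F) (hbil : IsBilinearMul m)
    (hnz : ¬ ∀ x y, m x y = 0)
    (hec : ∀ x y : F × F, m (m x x) (m y y) = m (m x y) (m x y))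
    (hcur : IsCurled m) :
    (∃! i : Option F, AlgIso m (ecCurledFamily3 i)) ∧
      ∀ i j : Option F, i ≠ j → ¬ AlgIso (ecCurledFamily3 i) (ecCurledFamily3 j) := by
  haveI hchar : CharP F 3 := h3 ▸ ringChar.charP F
  have char3 : (3:F) = 0 := by
    have h := CharP.cast_eq_zero F 3
    exact_mod_cast h
  have pair := pairwise_noniso (F := F) char3
  refine ⟨?_, pair⟩
  obtain ⟨a1, a2, a3, a4, b1, b2, b3, b4, hm⟩ := exists_consts m hbil
  obtain ⟨l1, hc1⟩ := hcur (1, 0)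
  obtain ⟨l2, hc2⟩ := hcur (0, 1)
  obtain ⟨l3, hc3⟩ := hcur (1, 1)
  obtain ⟨l4, hc4⟩ := hcur (1, -1)
  rw [hm] at hc1 hc2 hc3 hc4
  simp only [scMul, Prod.smul_mk, smul_eq_mul, Prod.mk.injEq] at hc1 hc2 hc3 hc4
  norm_num at hc1 hc2 hc3 hc4
  have hb1 : b1 = 0 := hc1.2
  have ha4 : a4 = 0 := hc2.1
  have hb3 : b3 = a1 - b2 := by
    linear_combination hc3.1 - hc3.2 + hc4.1 + hc4.2 + ha4 + (b2 + b3 - a1 - a4) * char3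
  have hb4 : b4 = a2 + a3 := by
    linear_combination hc3.1 - hc3.2 - hc4.1 - hc4.2 - hb1 + (b1 + b4 - a2 - a3) * char3
  subst hb1 ha4 hb3 hb4
  have hec' : ∀ x y : F × F,
      scMul a1 a2 a3 0 0 b2 (a1 - b2) (a2 + a3)
        (scMul a1 a2 a3 0 0 b2 (a1 - b2) (a2 + a3) x x)
        (scMul a1 a2 a3 0 0 b2 (a1 - b2) (a2 + a3) y y) =
      scMul a1 a2 a3 0 0 b2 (a1 - b2) (a2 + a3)
        (scMul a1 a2 a3 0 0 b2 (a1 - b2) (a2 + a3) x y)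
        (scMul a1 a2 a3 0 0 b2 (a1 - b2) (a2 + a3) x y) := by
    intro x y
    have h := hec x y
    simp only [hm] at h
    exact h
  have h1 := hec' (1, 0) (0, 1)
  have h2 := hec' (0, 1) (1, 0)
  simp only [scMul, Prod.mk.injEq] at h1 h2
  norm_num at h1 h2
  have hbK : b2 * (a1 * a3 - b2 * (a2 + a3)) = 0 := by linear_combination h1.2
  have haK : a1 * (a1 * a3 - b2 * (a2 + a3)) = 0 := by linear_combination h1.2 - h2.2
  have hK : a1 * a3 - b2 * (a2 + a3) = 0 := by
    by_contra hK0
    have ha0 : a1 = 0 := by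
      rcases mul_eq_zero.mp haK with h | h
      · exact h
      · exact absurd h hK0
    have hb0 : b2 = 0 := by
      rcases mul_eq_zero.mp hbK with h | h
      · exact h
      · exact absurd h hK0
    exact hK0 (by linear_combination a3 * ha0 - (a2 + a3) * hb0)
  have hNZ : ¬(a1 = 0 ∧ a2 = 0 ∧ a3 = 0 ∧ b2 = 0) := by
    rintro ⟨z1, z2, z3, z4⟩
    subst z1 z2 z3 z4
    apply hnz
    intro x y
    rw [hm]
    simp [scMul]
  have hex : ∃ i : Option F, AlgIso m (ecCurledFamily3 i) := by
    by_cases ha : a1 = 0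
    · by_cases hσ : a2 + a3 = 0
      · -- case A : the multiplication is w(x,y)•(a2,b2)
        have ht : a3 = -a2 := by linear_combination hσ
        subst ha ht
        by_cases hs : a2 = 0
        · -- case A2
          have hb : b2 ≠ 0 := by
            intro h
            exact hNZ ⟨rfl, hs, by rw [hs, neg_zero], h⟩
          subst hs
          obtain ⟨j, hj⟩ : ∃ j, b2 * j = 1 := ⟨b2⁻¹, mul_inv_cancel₀ hb⟩
          have hjne : j ≠ 0 := by intro h; rw [h, mul_zero] at hj; exact zero_ne_one hj
          have hdet : -j * 1 - 0 * 0 ≠ 0 := by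
            intro h; exact hjne (by linear_combination -h)
          refine ⟨some 0, algIso_of_matrix _ _ (mkEquiv (-j) 0 0 1 hdet) fun x y => ?_⟩
          rw [hm]
          simp only [ecCurledFamily3, mkEquiv_apply, scMul, Prod.mk.injEq]
          constructor
          · ring
          · linear_combination ((-1)*x.1*y.2 + x.2*y.1) * hj
        · -- case A1
          obtain ⟨j, hj⟩ : ∃ j, a2 * j = 1 := ⟨a2⁻¹, mul_inv_cancel₀ hs⟩
          have hdet : 0 * (-b2) - (-a2) * j ≠ 0 := by
            intro h; exact one_ne_zero (by linear_combination h - hj)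
          refine ⟨some 0, algIso_of_matrix _ _ (mkEquiv 0 (-a2) j (-b2) hdet) fun x y => ?_⟩
          rw [hm]
          simp only [ecCurledFamily3, mkEquiv_apply, scMul, Prod.mk.injEq]
          constructor
          · linear_combination (a2*x.1*y.2 - a2*x.2*y.1) * hj
          · linear_combination (b2*x.1*y.2 - b2*x.2*y.1) * hj
      · -- case B2 : a1 = 0, a2 + a3 ≠ 0
        subst ha
        have hb0 : b2 = 0 := by
          rcases mul_eq_zero.mp (show b2 * (a2 + a3) = 0 by linear_combination -hK) with h | h
          · exact h
          · exact absurd h hσ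
        subst hb0
        by_cases hst : a3 = a2
        · -- case B2b : t = s, fam none
          subst hst
          have hs : a3 ≠ 0 := by
            intro h
            rw [h, add_zero] at hσ
            exact hσ rfl
          obtain ⟨j, hj⟩ : ∃ j, a3 * j = 1 := ⟨a3⁻¹, mul_inv_cancel₀ hs⟩
          have hdet : a3 * j - 0 * 0 ≠ 0 := by
            intro h; exact one_ne_zero (by linear_combination h - hj)
          refine ⟨none, algIso_of_matrix _ _ (mkEquiv a3 0 0 j hdet) fun x y => ?_⟩
          rw [hm]
          simp only [ecCurledFamily3, mkEquiv_apply, scMul, Prod.mk.injEq]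
          constructor
          · linear_combination (a3*x.1*y.2 + a3*x.2*y.1) * hj
          · linear_combination ((-1)*j*x.2*y.2) * hj + (j*j*a3*x.2*y.2) * char3
        · -- case B2a
          have hts : a3 - a2 ≠ 0 := sub_ne_zero_of_ne hst
          obtain ⟨j, hj⟩ : ∃ j, (a3 - a2) * j = 1 := ⟨(a3 - a2)⁻¹, mul_inv_cancel₀ hts⟩
          have hdet : 0 * 0 - -(a2 + a3) * j ≠ 0 := by
            intro h
            exact hσ (by linear_combination (a3 - a2) * h - (a2 + a3) * hj)
          refine ⟨some ((a2 + a3) * j),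
            algIso_of_matrix _ _ (mkEquiv 0 (-(a2 + a3)) j 0 hdet) fun x y => ?_⟩
          rw [hm]
          simp only [ecCurledFamily3, mkEquiv_apply, scMul, Prod.mk.injEq]
          constructor
          · linear_combination (a2*x.1*y.2 - a2*x.2*y.1 + a3*x.1*y.2 - a3*x.2*y.1) * hj +
              (j*a2*a3*x.1*y.2 - j*a2*a3*x.2*y.1 + j*a2*a2*x.1*y.2 - j*a2*a2*x.2*y.1) * char3
          · ring
    · -- case B1 : a1 ≠ 0
      by_cases hb2a : b2 = 2 * a1
      · -- case B1b
        subst hb2a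
        have h5 : a1 * (a3 - 2 * (a2 + a3)) = 0 := by linear_combination hK
        have h6 : a3 - 2 * (a2 + a3) = 0 := by
          rcases mul_eq_zero.mp h5 with h | h
          · exact absurd h ha
          · exact h
        have ht : a3 = a2 := by linear_combination -h6 - a2 * char3
        subst ht
        obtain ⟨j, hj⟩ : ∃ j, a1 * j = 1 := ⟨a1⁻¹, mul_inv_cancel₀ ha⟩
        have hdet : -(a3 + a3) * 0 - -j * a1 ≠ 0 := by
          intro h; exact one_ne_zero (by linear_combination h - hj)
        refine ⟨none, algIso_of_matrix _ _ (mkEquiv (-(a3 + a3)) (-j) a1 0 hdet) fun x y => ?_⟩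
        rw [hm]
        simp only [ecCurledFamily3, mkEquiv_apply, scMul, Prod.mk.injEq]
        constructor
        · linear_combination ((-3)*a1*j*a3*x.1*y.2 - (3)*a1*j*a3*x.2*y.1 + j*x.2*y.2
            - (2)*a3*x.1*y.2 - (2)*a3*x.2*y.1) * hj +
            (a1*a1*j*j*a3*x.1*y.2 + a1*a1*j*j*a3*x.2*y.1) * char3
        · linear_combination (a1*x.1*y.2 + a1*x.2*y.1) * hj + ((-1)*a1*a1*j*x.2*y.1) * char3
      · -- case B1a
        have hD : 2 * a1 - b2 ≠ 0 := by
          intro h; exact hb2a (by linear_combination -h)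
        obtain ⟨j, hj⟩ : ∃ j, (2 * a1 - b2) * j = 1 := ⟨(2 * a1 - b2)⁻¹, mul_inv_cancel₀ hD⟩
        have hjne : j ≠ 0 := by intro h0; rw [h0, mul_zero] at hj; exact zero_ne_one hj
        have hdet : j * a1 - -(a2 + a3) * 0 ≠ 0 := by
          intro h
          have hja : j * a1 = 0 := by linear_combination h
          rcases mul_eq_zero.mp hja with h' | h'
          · exact hjne h'
          · exact ha h'
        refine ⟨some (a1 * j),
          algIso_of_matrix _ _ (mkEquiv j (-(a2 + a3)) 0 a1 hdet) fun x y => ?_⟩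
        rw [hm]
        simp only [ecCurledFamily3, mkEquiv_apply, scMul, Prod.mk.injEq]
        constructor
        · linear_combination ((-1)*j*x.1*y.2 + j*x.2*y.1) * hK +
            (a2*x.1*y.2 - a2*x.2*y.1 + a3*x.1*y.2 - a3*x.2*y.1) * hj
        · linear_combination ((-1)*a1*x.1*y.2 + a1*x.2*y.1) * hj
  obtain ⟨i, hi⟩ := hex
  exact ⟨i, hi, fun j hj => by
    by_contra hne
    exact pair j i hne (algIso_trans (algIso_symm hj) hi)⟩
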